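/- arXiv:1011.3559 — 2 statements merged into one kernel-verified Lean document; each statement's English description precedes it below -/
import Mathlib

section
/- Let $P$ be a finite $p$-group with subgroup $Q$, write $kP^Q = kC \ltimes I$ with $C = C_P(Q)$ and $J' = J(kC)$. Then $J'I = IJ'$ if and only if for all $x \in P$ and all $c \in C$ there exists $q \in Q$ such that $[x, qc] \in C$. -/
set_option synthInstance.maxHeartbeats 1000000
set_option maxHeartbeats 1000000

open MonoidAlgebra Finset
open scoped Classical
open scoped commutatorElement

/-- The centralizer algebra `kP^Q`: the subalgebra of the group algebra `kP`
fixed by the conjugation action of the subgroup `Q`. -/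
noncomputable def centAlg (k : Type*) [Field k] {P : Type*} [Group P] (Q : Subgroup P) :
    Subalgebra k (MonoidAlgebra k P) :=
  ⨅ q ∈ Q, AlgHom.equalizer
    (MonoidAlgebra.domCongr k k (MulAut.conj q : P ≃* P)).toAlgHom (AlgHom.id k _)

/-- The augmentation map `kP → k`. -/
noncomputable def aug (k : Type*) [Field k] (P : Type*) [Group P] :
    MonoidAlgebra k P →ₐ[k] k := MonoidAlgebra.lift k k P 1

/-- The Jacobson radical of a `k`-algebra, as a `k`-submodule. -/
noncomputable def jacRad (k : Type*) [Field k] (A : Type*) [Ring A] [Algebra k A] :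
    Submodule k A :=
  Submodule.restrictScalars k ((⊥ : Ideal A).jacobson)

/-- The Loewy length: the least `d` with `J^d = 0`. -/
noncomputable def llen (k : Type*) [Field k] (A : Type*) [Ring A] [Algebra k A] : ℕ :=
  sInf {d | jacRad k A ^ d = ⊥}

/-- The `Q`-conjugation orbit sum `κ_x ∈ kP`. -/
noncomputable def kappa {k : Type*} [Field k] {P : Type*} [Group P] [Fintype P]
    (Q : Subgroup P) (x : P) : MonoidAlgebra k P :=
  ∑ y ∈ Finset.univ.filter (fun y => ∃ q ∈ Q, q * x * q⁻¹ = y), MonoidAlgebra.single y 1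

/-- The span `I` of the orbit sums `κ_x`, `x ∉ C_P(Q)`. -/
noncomputable def idealI (k : Type*) [Field k] {P : Type*} [Group P] [Fintype P]
    (Q : Subgroup P) : Submodule k (MonoidAlgebra k P) :=
  Submodule.span k
    {f | ∃ x ∉ Subgroup.centralizer (Q : Set P), f = kappa Q x}

/-- The span of `C_P(Q)` inside `kP`, i.e. the subalgebra `kC_P(Q)`. -/
noncomputable def subC (k : Type*) [Field k] {P : Type*} [Group P]
    (Q : Subgroup P) : Submodule k (MonoidAlgebra k P) :=
  Submodule.span k
    {f | ∃ c ∈ Subgroup.centralizer (Q : Set P), f = MonoidAlgebra.single c (1 : k)}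

/-- The radical `J' = J(kC_P(Q))`, i.e. the augmentation-trivial part of `kC_P(Q)`. -/
noncomputable def jacC (k : Type*) [Field k] {P : Type*} [Group P]
    (Q : Subgroup P) : Submodule k (MonoidAlgebra k P) :=
  subC k Q ⊓ LinearMap.ker (aug k P).toLinearMap



section AuxLemmas
set_option linter.unusedSectionVars false
variable {k : Type*} [Field k] {P : Type*} [Group P] [Fintype P] (Q : Subgroup P)

lemma comm_c {c : P} (hc : c ∈ Subgroup.centralizer (Q : Set P)) {q : P} (hq : q ∈ Q) :
    q * c = c * q := (Subgroup.mem_centralizer_iff.mp hc q hq)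

lemma kappa_apply (x z : P) :
    (kappa Q x : MonoidAlgebra k P).coeff z = if (∃ q ∈ Q, q * x * q⁻¹ = z) then 1 else 0 := by
  classical
  rw [kappa]
  rw [MonoidAlgebra.coeff_sum, Finsupp.finset_sum_apply]
  simp only [MonoidAlgebra.single_apply]
  rw [Finset.sum_ite_eq' (Finset.univ.filter (fun y => ∃ q ∈ Q, q * x * q⁻¹ = y)) z
    (fun _ => (1:k))]
  simp

lemma kappa_ext {x x' : P}
    (h : ∀ z, (∃ q ∈ Q, q * x * q⁻¹ = z) ↔ (∃ q ∈ Q, q * x' * q⁻¹ = z)) :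
    (kappa Q x : MonoidAlgebra k P) = kappa Q x' := by
  unfold kappa
  congr 1
  ext z
  simp only [mem_filter, mem_univ, true_and]
  exact h z

lemma kappa_conj {x q₀ : P} (hq₀ : q₀ ∈ Q) :
    (kappa Q (q₀ * x * q₀⁻¹) : MonoidAlgebra k P) = kappa Q x := by
  apply kappa_ext
  intro z
  constructor
  · rintro ⟨q, hq, rfl⟩
    exact ⟨q * q₀, mul_mem hq hq₀, by group⟩
  · rintro ⟨q, hq, rfl⟩
    exact ⟨q * q₀⁻¹, mul_mem hq (inv_mem hq₀), by group⟩

lemma single_mul_kappa {c : P} (hc : c ∈ Subgroup.centralizer (Q : Set P)) (x : P) :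
    (MonoidAlgebra.single c (1:k)) * kappa Q x = kappa Q (c * x) := by
  unfold kappa
  rw [Finset.mul_sum]
  simp only [MonoidAlgebra.single_mul_single, one_mul]
  apply Finset.sum_nbij' (fun y => c * y) (fun y => c⁻¹ * y)
  · intro y hy
    simp only [mem_filter, mem_univ, true_and] at hy ⊢
    obtain ⟨q, hq, rfl⟩ := hy
    exact ⟨q, hq, by rw [← mul_assoc, ← mul_assoc, ← mul_assoc, comm_c Q hc hq]⟩
  · intro y hy
    simp only [mem_filter, mem_univ, true_and] at hy ⊢
    obtain ⟨q, hq, rfl⟩ := hy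
    refine ⟨q, hq, ?_⟩
    have h1 := comm_c Q hc hq
    calc q * x * q⁻¹ = c⁻¹ * (c * q) * x * q⁻¹ := by group
    _ = c⁻¹ * (q * c) * x * q⁻¹ := by rw [h1]
    _ = c⁻¹ * (q * (c * x) * q⁻¹) := by group
  · intro y _; group
  · intro y _; group
  · intro y _; rfl

lemma kappa_mul_single {c : P} (hc : c ∈ Subgroup.centralizer (Q : Set P)) (x : P) :
    kappa Q x * (MonoidAlgebra.single c (1:k)) = kappa Q (x * c) := by
  unfold kappa
  rw [Finset.sum_mul]
  simp only [MonoidAlgebra.single_mul_single, mul_one]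
  apply Finset.sum_nbij' (fun y => y * c) (fun y => y * c⁻¹)
  · intro y hy
    simp only [mem_filter, mem_univ, true_and] at hy ⊢
    obtain ⟨q, hq, rfl⟩ := hy
    refine ⟨q, hq, ?_⟩
    calc q * (x * c) * q⁻¹ = q * x * (c * q⁻¹) := by group
    _ = q * x * (q⁻¹ * c) := by rw [← comm_c Q hc (inv_mem hq)]
    _ = q * x * q⁻¹ * c := by group
  · intro y hy
    simp only [mem_filter, mem_univ, true_and] at hy ⊢
    obtain ⟨q, hq, rfl⟩ := hy
    refine ⟨q, hq, ?_⟩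
    calc q * x * q⁻¹ = q * (x * c) * (c⁻¹ * q⁻¹) := by group
    _ = q * (x * c) * (q⁻¹ * c⁻¹) := by rw [comm_c Q (inv_mem hc) (inv_mem hq)]
    _ = q * (x * c) * q⁻¹ * c⁻¹ := by group
  · intro y _; group
  · intro y _; group
  · intro y _; rfl

/-- The setoid of `Q`-conjugation orbits. -/
def orbSetoid : Setoid P where
  r x y := ∃ q ∈ Q, q * x * q⁻¹ = y
  iseqv := by
    refine ⟨fun x => ⟨1, one_mem Q, by group⟩, ?_, ?_⟩
    · rintro x y ⟨q, hq, rfl⟩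
      exact ⟨q⁻¹, inv_mem hq, by group⟩
    · rintro x y z ⟨q, hq, rfl⟩ ⟨q', hq', rfl⟩
      exact ⟨q' * q, mul_mem hq' hq, by group⟩

/-- A canonical representative of the `Q`-orbit of `x`. -/
noncomputable def orep (x : P) : P := Quotient.out (Quotient.mk (orbSetoid Q) x)

lemma orep_spec (x : P) : ∃ q ∈ Q, q * x * q⁻¹ = orep Q x := by
  have h : Quotient.mk (orbSetoid Q) (orep Q x) = Quotient.mk (orbSetoid Q) x :=
    Quotient.out_eq _
  have h2 : ∃ q ∈ Q, q * (orep Q x) * q⁻¹ = x := Quotient.exact h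
  obtain ⟨q, hq, hqe⟩ := h2
  refine ⟨q⁻¹, inv_mem hq, ?_⟩
  conv_lhs => rw [← hqe]
  group

lemma orep_eq {x z : P} (h : ∃ q ∈ Q, q * x * q⁻¹ = z) : orep Q z = orep Q x := by
  unfold orep
  rw [Quotient.sound (s := orbSetoid Q) h]

lemma orep_idem (x : P) : orep Q (orep Q x) = orep Q x := orep_eq Q (orep_spec Q x)

lemma aug_single (a : P) : aug k P (MonoidAlgebra.single a (1:k)) = 1 := by
  simp [aug]

lemma gen_mem_jacC {c : P} (hc : c ∈ Subgroup.centralizer (Q : Set P)) :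
    MonoidAlgebra.single c (1:k) - MonoidAlgebra.single 1 (1:k) ∈ jacC k Q := by
  refine Submodule.mem_inf.mpr ⟨?_, ?_⟩
  · exact sub_mem (Submodule.subset_span ⟨c, hc, rfl⟩)
      (Submodule.subset_span ⟨1, one_mem _, rfl⟩)
  · rw [LinearMap.mem_ker]
    show aug k P (MonoidAlgebra.single c (1:k) - MonoidAlgebra.single 1 (1:k)) = 0
    rw [map_sub, aug_single, aug_single, sub_self]

lemma jacC_eq : jacC k Q = Submodule.span k
    {f | ∃ c ∈ Subgroup.centralizer (Q : Set P),
      f = MonoidAlgebra.single c (1:k) - MonoidAlgebra.single 1 (1:k)} := by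
  apply le_antisymm
  · set L : MonoidAlgebra k P →ₗ[k] MonoidAlgebra k P :=
      LinearMap.id - LinearMap.smulRight (aug k P).toLinearMap
        (MonoidAlgebra.single 1 (1:k)) with hL
    have hLsub : subC k Q ≤ Submodule.comap L (Submodule.span k
        {f | ∃ c ∈ Subgroup.centralizer (Q : Set P),
          f = MonoidAlgebra.single c (1:k) - MonoidAlgebra.single 1 (1:k)}) := by
      rw [subC]
      apply Submodule.span_le.mpr
      rintro f ⟨c, hc, rfl⟩
      rw [SetLike.mem_coe, Submodule.mem_comap, hL]
      simp only [LinearMap.sub_apply, LinearMap.id_apply,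
        LinearMap.smulRight_apply, AlgHom.toLinearMap_apply]
      rw [aug_single, one_smul]
      exact Submodule.subset_span ⟨c, hc, rfl⟩
    rintro f hf
    obtain ⟨hf1, hf2⟩ := Submodule.mem_inf.mp hf
    have hker : aug k P f = 0 := LinearMap.mem_ker.mp hf2
    have := hLsub hf1
    rw [Submodule.mem_comap] at this
    simpa [hL, LinearMap.sub_apply, hker] using this
  · apply Submodule.span_le.mpr
    rintro f ⟨c, hc, rfl⟩
    exact gen_mem_jacC Q hc

lemma key_iff {x c : P} (hc : c ∈ Subgroup.centralizer (Q : Set P)) :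
    (∃ q ∈ Q, ⁅x, q * c⁆ ∈ Subgroup.centralizer (Q : Set P)) ↔
      (∃ q ∈ Q, ∃ z ∈ Subgroup.centralizer (Q : Set P), x * c = q * z * x * q⁻¹) := by
  constructor
  · rintro ⟨q, hq, hz⟩
    refine ⟨q, hq, ⁅x, q * c⁆ * c, mul_mem hz hc, ?_⟩
    have h1 : ⁅x, q * c⁆ * (q * c) = x * (q * c) * x⁻¹ := by
      rw [commutatorElement_def]; group
    have h2 : x * (q * c) = ⁅x, q * c⁆ * (q * c) * x := by rw [h1]; group
    have hcq : q * c = c * q := comm_c Q hc hq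
    have hzq : q * ⁅x, q * c⁆ = ⁅x, q * c⁆ * q := comm_c Q hz hq
    calc x * c = x * (c * q) * q⁻¹ := by group
    _ = x * (q * c) * q⁻¹ := by rw [hcq]
    _ = ⁅x, q * c⁆ * (q * c) * x * q⁻¹ := by rw [h2]
    _ = ⁅x, q * c⁆ * q * (c * x) * q⁻¹ := by group
    _ = q * ⁅x, q * c⁆ * (c * x) * q⁻¹ := by rw [← hzq]
    _ = q * (⁅x, q * c⁆ * c) * x * q⁻¹ := by group
  · rintro ⟨q, hq, z, hz, he⟩
    refine ⟨q, hq, ?_⟩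
    have hcq : q * c = c * q := comm_c Q hc hq
    have hxqc : x * q * c = q * z * x := by
      calc x * q * c = x * (q * c) := by group
      _ = x * (c * q) := by rw [hcq]
      _ = x * c * q := by group
      _ = q * z * x * q⁻¹ * q := by rw [he]
      _ = q * z * x := by group
    have : ⁅x, q * c⁆ = z * c⁻¹ := by
      calc ⁅x, q * c⁆ = x * (q * c) * x⁻¹ * (q * c)⁻¹ := commutatorElement_def _ _
      _ = (x * q * c) * (x⁻¹ * c⁻¹ * q⁻¹) := by group
      _ = (q * z * x) * (x⁻¹ * c⁻¹ * q⁻¹) := by rw [hxqc]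
      _ = q * (z * c⁻¹) * q⁻¹ := by group
      _ = (z * c⁻¹) * q * q⁻¹ := by rw [comm_c Q (mul_mem hz (inv_mem hc)) hq]
      _ = z * c⁻¹ := by group
    rw [this]
    exact mul_mem hz (inv_mem hc)

lemma srel_conj_iff {x₀ y q' : P} (hq' : q' ∈ Q) :
    (∃ q ∈ Q, ∃ z ∈ Subgroup.centralizer (Q : Set P), q' * y * q'⁻¹ = q * z * x₀ * q⁻¹) ↔
      (∃ q ∈ Q, ∃ z ∈ Subgroup.centralizer (Q : Set P), y = q * z * x₀ * q⁻¹) := by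
  constructor
  · rintro ⟨q, hq, z, hz, he⟩
    refine ⟨q'⁻¹ * q, mul_mem (inv_mem hq') hq, z, hz, ?_⟩
    have : y = q'⁻¹ * (q * z * x₀ * q⁻¹) * q' := by rw [← he]; group
    rw [this]; group
  · rintro ⟨q, hq, z, hz, rfl⟩
    exact ⟨q' * q, mul_mem hq' hq, z, hz, by group⟩

lemma srel_lmul_iff {x₀ y z' : P} (hz' : z' ∈ Subgroup.centralizer (Q : Set P)) :
    (∃ q ∈ Q, ∃ z ∈ Subgroup.centralizer (Q : Set P), z' * y = q * z * x₀ * q⁻¹) ↔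
      (∃ q ∈ Q, ∃ z ∈ Subgroup.centralizer (Q : Set P), y = q * z * x₀ * q⁻¹) := by
  have fwd : ∀ w : P, ∀ u ∈ Subgroup.centralizer (Q : Set P),
      (∃ q ∈ Q, ∃ z ∈ Subgroup.centralizer (Q : Set P), w = q * z * x₀ * q⁻¹) →
      (∃ q ∈ Q, ∃ z ∈ Subgroup.centralizer (Q : Set P), u * w = q * z * x₀ * q⁻¹) := by
    rintro w u hu ⟨q, hq, z, hz, rfl⟩
    refine ⟨q, hq, u * z, mul_mem hu hz, ?_⟩
    calc u * (q * z * x₀ * q⁻¹) = (u * q) * (z * x₀ * q⁻¹) := by group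
    _ = (q * u) * (z * x₀ * q⁻¹) := by rw [comm_c Q hu hq]
    _ = q * (u * z) * x₀ * q⁻¹ := by group
  constructor
  · intro h
    have := fwd (z' * y) z'⁻¹ (inv_mem hz') h
    simpa using this
  · exact fwd y z' hz'

/-- The linear functional summing coordinates over a finite set. -/
noncomputable def sumAt (T : Finset P) : MonoidAlgebra k P →ₗ[k] k where
  toFun f := ∑ z ∈ T, f.coeff z
  map_add' f g := by
    rw [← Finset.sum_add_distrib]
    exact Finset.sum_congr rfl (fun z _ => Finsupp.add_apply f.coeff g.coeff z)
  map_smul' a f := by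
    simp only [RingHom.id_apply]
    rw [Finset.smul_sum]
    exact Finset.sum_congr rfl (fun z _ => MonoidAlgebra.coeff_smul_apply _ _ _)

lemma sumAt_kappa (T : Finset P) (x : P) :
    sumAt T (kappa Q x : MonoidAlgebra k P) =
      ((T.filter (fun z => ∃ q ∈ Q, q * x * q⁻¹ = z)).card : k) := by
  classical
  show (∑ z ∈ T, (kappa Q x : MonoidAlgebra k P).coeff z) = _
  rw [Finset.sum_congr rfl (fun z _ => kappa_apply Q x z)]
  rw [Finset.sum_boole]

end AuxLemmas

theorem stmt_5 {p : ℕ} [Fact p.Prime] (k : Type*) [Field k] [CharP k p]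
    (P : Type*) [Group P] [Fintype P] (hP : IsPGroup p P) (Q : Subgroup P) :
    jacC k Q * idealI k Q = idealI k Q * jacC k Q ↔
      ∀ x : P, ∀ c ∈ Subgroup.centralizer (Q : Set P),
        ∃ q ∈ Q, ⁅x, q * c⁆ ∈ Subgroup.centralizer (Q : Set P) := by
  classical
  constructor
  · -- equality implies the condition
    intro heq x c hc
    by_contra hfail
    push_neg at hfail
    have hnS : ¬ ∃ q ∈ Q, ∃ z ∈ Subgroup.centralizer (Q : Set P), x * c = q * z * x * q⁻¹ := by
      intro h
      obtain ⟨q, hq, h'⟩ := (key_iff Q hc).mpr h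
      exact hfail q hq h'
    have hxC : x ∉ Subgroup.centralizer (Q : Set P) := by
      intro hx
      exact hnS ⟨1, one_mem Q, x * c * x⁻¹, mul_mem (mul_mem hx hc) (inv_mem hx), by group⟩
    set T : Finset P := Finset.univ.filter
      (fun w => (∃ q ∈ Q, ∃ z ∈ Subgroup.centralizer (Q : Set P), w = q * z * x * q⁻¹)
        ∧ orep Q w = w) with hT
    set φ : MonoidAlgebra k P →ₗ[k] k := sumAt T with hφ
    have hval : ∀ y : P, φ (kappa Q y) =
        if (∃ q ∈ Q, ∃ z ∈ Subgroup.centralizer (Q : Set P), y = q * z * x * q⁻¹)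
        then 1 else 0 := by
      intro y
      rw [hφ, sumAt_kappa]
      by_cases hy : ∃ q ∈ Q, ∃ z ∈ Subgroup.centralizer (Q : Set P), y = q * z * x * q⁻¹
      · rw [if_pos hy]
        have hfe : T.filter (fun z => ∃ q ∈ Q, q * y * q⁻¹ = z) = {orep Q y} := by
          ext w
          simp only [hT, Finset.mem_filter, Finset.mem_univ, true_and, Finset.mem_singleton]
          constructor
          · rintro ⟨⟨hw1, hw2⟩, hw3⟩
            rw [← hw2]
            exact orep_eq Q hw3
          · rintro rfl
            obtain ⟨q, hq, hqe⟩ := orep_spec Q y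
            refine ⟨⟨?_, orep_idem Q y⟩, ⟨q, hq, hqe⟩⟩
            rw [← hqe]
            exact (srel_conj_iff Q hq).mpr hy
        rw [hfe]
        simp
      · rw [if_neg hy]
        have hfe : T.filter (fun z => ∃ q ∈ Q, q * y * q⁻¹ = z) = ∅ := by
          ext w
          simp only [hT, Finset.mem_filter, Finset.mem_univ, true_and,
            Finset.notMem_empty, iff_false, not_and]
          rintro ⟨hw1, hw2⟩ ⟨q, hq, rfl⟩
          exact hy ((srel_conj_iff Q hq).mp hw1)
        rw [hfe]
        simp
    have hker : jacC k Q * idealI k Q ≤ LinearMap.ker φ := by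
      rw [jacC_eq, idealI, Submodule.span_mul_span]
      apply Submodule.span_le.mpr
      rintro g hg
      rw [Set.mem_mul] at hg
      obtain ⟨a, ha, b, hb, rfl⟩ := hg
      obtain ⟨c', hc', rfl⟩ := ha
      obtain ⟨y, hy, rfl⟩ := hb
      rw [SetLike.mem_coe, LinearMap.mem_ker]
      rw [sub_mul, single_mul_kappa Q hc', single_mul_kappa Q (one_mem _), one_mul]
      rw [map_sub, hval, hval, if_congr (srel_lmul_iff Q hc') rfl rfl, sub_self]
    have hw : kappa Q x * (MonoidAlgebra.single c (1:k) - MonoidAlgebra.single 1 (1:k))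
        ∈ jacC k Q * idealI k Q := by
      rw [heq]
      exact Submodule.mul_mem_mul (Submodule.subset_span ⟨x, hxC, rfl⟩) (gen_mem_jacC Q hc)
    have h0 : φ (kappa Q x * (MonoidAlgebra.single c (1:k) - MonoidAlgebra.single 1 (1:k))) = 0 :=
      hker hw
    rw [mul_sub, kappa_mul_single Q hc, kappa_mul_single Q (one_mem _), mul_one] at h0
    rw [map_sub, hval, hval] at h0
    rw [if_neg hnS, if_pos ⟨1, one_mem Q, 1, one_mem _, by group⟩] at h0
    simp at h0
  · -- the condition implies equality
    intro hcond
    apply le_antisymm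
    · rw [jacC_eq, idealI, Submodule.span_mul_span]
      apply Submodule.span_le.mpr
      rintro g hg
      rw [Set.mem_mul] at hg
      obtain ⟨a, ha, b, hb, rfl⟩ := hg
      obtain ⟨c', hc', rfl⟩ := ha
      obtain ⟨y, hy, rfl⟩ := hb
      rw [SetLike.mem_coe]
      rw [sub_mul, single_mul_kappa Q hc', single_mul_kappa Q (one_mem _), one_mul]
      obtain ⟨q, hq, z, hz, he⟩ := (key_iff Q (inv_mem hc')).mp (hcond y⁻¹ c'⁻¹ (inv_mem hc'))
      have he2 : c' * y = q * (y * z⁻¹) * q⁻¹ := by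
        calc c' * y = (y⁻¹ * c'⁻¹)⁻¹ := by group
        _ = (q * z * y⁻¹ * q⁻¹)⁻¹ := by rw [he]
        _ = q * (y * z⁻¹) * q⁻¹ := by group
      rw [he2, kappa_conj Q hq]
      have hfact : (kappa Q (y * z⁻¹) : MonoidAlgebra k P) - kappa Q y =
          kappa Q y * (MonoidAlgebra.single z⁻¹ (1:k) - MonoidAlgebra.single 1 (1:k)) := by
        rw [mul_sub, kappa_mul_single Q (inv_mem hz), kappa_mul_single Q (one_mem _), mul_one]
      rw [hfact]
      exact Submodule.mul_mem_mul (Submodule.subset_span ⟨y, hy, rfl⟩)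
        (Submodule.subset_span ⟨z⁻¹, inv_mem hz, rfl⟩)
    · rw [jacC_eq, idealI, Submodule.span_mul_span]
      apply Submodule.span_le.mpr
      rintro g hg
      rw [Set.mem_mul] at hg
      obtain ⟨a, ha, b, hb, rfl⟩ := hg
      obtain ⟨y, hy, rfl⟩ := ha
      obtain ⟨c', hc', rfl⟩ := hb
      rw [SetLike.mem_coe]
      rw [mul_sub, kappa_mul_single Q hc', kappa_mul_single Q (one_mem _), mul_one]
      obtain ⟨q, hq, z, hz, he⟩ := (key_iff Q hc').mp (hcond y c' hc')
      have he2 : y * c' = q * (z * y) * q⁻¹ := by rw [he]; group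
      rw [he2, kappa_conj Q hq]
      have hfact : (kappa Q (z * y) : MonoidAlgebra k P) - kappa Q y =
          (MonoidAlgebra.single z (1:k) - MonoidAlgebra.single 1 (1:k)) * kappa Q y := by
        rw [sub_mul, single_mul_kappa Q hz, single_mul_kappa Q (one_mem _), one_mul]
      rw [hfact]
      exact Submodule.mul_mem_mul (Submodule.subset_span ⟨z, hz, rfl⟩)
        (Submodule.subset_span ⟨y, hy, rfl⟩)
end

section
/- Let $P$ be a finite $p$-group, $R \leq P$ a nontrivial subgroup, and $k$ a field of characteristic $p$. Then the Loewy length of the $kP$-module $k[P/R]$ is strictly smaller than the Loewy length of $kP$: $\ell\ell(k[P/R]) < \ell\ell(kP)$. -/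
set_option synthInstance.maxHeartbeats 1000000
set_option maxHeartbeats 1000000

open MonoidAlgebra Finset
open scoped Classical

lemma aug_single_s15 {k : Type*} [Field k] {P : Type*} [Group P] (g : P) (c : k) :
    aug k P (MonoidAlgebra.single g c) = c := by
  simp [aug]

lemma charP_MA {p : ℕ} [Fact p.Prime] (k : Type*) [Field k] [CharP k p] (P : Type*) [Group P] :
    CharP (MonoidAlgebra k P) p := by
  have hinj : Function.Injective (algebraMap k (MonoidAlgebra k P)) := fun a b h => by
    simpa [aug_single_s15] using congrArg (aug k P) h
  exact charP_of_injective_algebraMap hinj p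

/-- kernel of the augmentation, as a `k`-submodule. -/
noncomputable def augKer (k : Type*) [Field k] (P : Type*) [Group P] :
    Submodule k (MonoidAlgebra k P) :=
  LinearMap.ker (aug k P).toLinearMap

lemma pow_mono {k A : Type*} [Field k] [Ring A] [Algebra k A] {M N : Submodule k A}
    (h : M ≤ N) : ∀ q, M ^ q ≤ N ^ q := by
  intro q
  induction q with
  | zero => simp
  | succ q ih => rw [pow_succ, pow_succ]; exact mul_le_mul' ih h

theorem augKer_nilpotent {p : ℕ} [Fact p.Prime] (k : Type*) [Field k] [CharP k p] :
    ∀ (n : ℕ) (P : Type u_2) [Group P] [Fintype P], Fintype.card P ≤ n → IsPGroup p P →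
      ∃ m, (augKer k P) ^ m = ⊥ := by
  intro n
  induction n with
  | zero =>
    intro P _ _ hcard _
    exact absurd hcard (by simpa using Fintype.card_pos)
  | succ n ih =>
    intro P _ _ hcard hP
    by_cases h1 : Fintype.card P = 1
    · -- trivial group
      haveI : Subsingleton P := Fintype.card_le_one_iff_subsingleton.mp h1.le
      refine ⟨1, le_bot_iff.mp ?_⟩
      rw [pow_one]
      intro f hf
      have hf0 : aug k P f = 0 := hf
      have hfe : f = MonoidAlgebra.single (1 : P) (f.coeff 1) := by
        ext g
        rw [Subsingleton.elim g (1 : P)]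
        simp
      rw [hfe, aug_single_s15] at hf0
      rw [hfe, hf0]
      simp
    · -- nontrivial group
      haveI : Nontrivial P := Fintype.one_lt_card_iff_nontrivial.mp
        (lt_of_le_of_ne (Nat.one_le_iff_ne_zero.mpr (Fintype.card_ne_zero)) (Ne.symm h1))
      haveI := hP.center_nontrivial
      obtain ⟨zz, hzz⟩ := exists_ne (1 : Subgroup.center P)
      set z : P := (zz : P) with hzdef
      have hz : z ∈ Subgroup.center P := zz.2
      have hz1 : z ≠ 1 := fun h => hzz (Subtype.ext h)
      -- the central subgroup N = <z>
      set N : Subgroup P := Subgroup.zpowers z with hNdef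
      have hNle : N ≤ Subgroup.center P := Subgroup.zpowers_le.mpr hz
      haveI hNnormal : N.Normal := by
        constructor
        intro x hx g
        have hxc : x ∈ Subgroup.center P := hNle hx
        have hgx : g * x = x * g := (Subgroup.mem_center_iff.mp hxc g)
        have : g * x * g⁻¹ = x := by rw [hgx]; group
        rwa [this]
      haveI : Fintype (P ⧸ N) := Fintype.ofFinite _
      -- cardinality drops
      have hcardlt : Fintype.card (P ⧸ N) < Fintype.card P := by
        have hmul := Subgroup.card_eq_card_quotient_mul_card_subgroup N
        haveI : Nontrivial N := ⟨⟨⟨z, Subgroup.mem_zpowers z⟩, 1, fun h => hz1 (by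
          simpa using congrArg (Subtype.val) h)⟩⟩
        have hN2 : 1 < Nat.card N := by
          rw [Nat.card_eq_fintype_card]
          exact Fintype.one_lt_card_iff_nontrivial.mpr inferInstance
        simp only [Nat.card_eq_fintype_card] at hmul
        have hq : 0 < Fintype.card (P ⧸ N) := Fintype.card_pos
        rw [Nat.card_eq_fintype_card] at hN2
        calc Fintype.card (P ⧸ N) = Fintype.card (P ⧸ N) * 1 := (mul_one _).symm
          _ < Fintype.card (P ⧸ N) * Fintype.card N := by
              exact Nat.mul_lt_mul_of_le_of_lt (le_refl _) hN2 hq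
          _ = Fintype.card P := hmul.symm
      obtain ⟨m, hm⟩ := ih (P ⧸ N) (by omega) (hP.to_quotient N)
      -- the quotient map on group algebras
      set π : MonoidAlgebra k P →ₐ[k] MonoidAlgebra k (P ⧸ N) :=
        MonoidAlgebra.mapDomainAlgHom k k (QuotientGroup.mk' N) with hπdef
      have hπsingle : ∀ (a : P) (b : k),
          π (MonoidAlgebra.single a b) = MonoidAlgebra.single (QuotientGroup.mk a) b := by
        intro a b
        simp [hπdef, MonoidAlgebra.mapDomainAlgHom, MonoidAlgebra.mapDomainRingHom,
          Finsupp.mapDomain_single]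
      -- π is compatible with augmentations
      have hπaug : ∀ f, aug k (P ⧸ N) (π f) = aug k P f := by
        intro f
        induction f using MonoidAlgebra.induction_linear with
        | zero => simp
        | add f g hf hg => rw [map_add, map_add, map_add, hf, hg]
        | single a b => rw [hπsingle, aug_single_s15, aug_single_s15]
      -- π maps augKer into augKer
      have hπmap : Submodule.map π.toLinearMap (augKer k P) ≤ augKer k (P ⧸ N) := by
        rintro _ ⟨f, hf, rfl⟩
        show aug k (P ⧸ N) (π f) = 0
        rw [hπaug]
        exact hf
      -- elements of (augKer)^m are killed by π
      have hπpow : ∀ f ∈ (augKer k P) ^ m, π f = 0 := by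
        intro f hf
        have h1 : π f ∈ Submodule.map π.toLinearMap ((augKer k P) ^ m) := ⟨f, hf, rfl⟩
        rw [Submodule.map_pow] at h1
        have h2 := pow_mono hπmap m h1
        rw [hm] at h2
        exact h2
      -- the central element ζ = z - 1
      set ζ : MonoidAlgebra k P := MonoidAlgebra.single z 1 - 1 with hζdef
      have hzcomm : ∀ x : MonoidAlgebra k P, MonoidAlgebra.single z (1:k) * x
          = x * MonoidAlgebra.single z (1:k) := by
        intro x
        ext y
        rw [MonoidAlgebra.single_mul_apply, MonoidAlgebra.mul_single_apply]
        have : z⁻¹ * y = y * z⁻¹ := by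
          have h := Subgroup.mem_center_iff.mp hz (y * z⁻¹)
          calc z⁻¹ * y = z⁻¹ * (y * z⁻¹ * z) := by group
            _ = z⁻¹ * (z * (y * z⁻¹)) := by rw [← h]
            _ = y * z⁻¹ := by group
        rw [this, one_mul, mul_one]
      have hζcomm : ∀ x : MonoidAlgebra k P, ζ * x = x * ζ := by
        intro x
        rw [hζdef, sub_mul, mul_sub, hzcomm, one_mul, mul_one]
      -- ζ is nilpotent
      obtain ⟨e, hze⟩ := hP z
      haveI : CharP (MonoidAlgebra k P) p := charP_MA k P
      have hζpow : ζ ^ (p ^ e) = 0 := by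
        rw [hζdef, sub_pow_char_pow_of_commute p e (Commute.one_right _)]
        rw [MonoidAlgebra.single_pow, hze, one_pow, one_pow]
        rw [← MonoidAlgebra.one_def]
        exact sub_self 1
      -- T: the left ideal generated by ζ, as the range of right multiplication
      set T : Submodule k (MonoidAlgebra k P) :=
        LinearMap.range (LinearMap.mulRight k ζ) with hTdef
      have hcommpow : ∀ (j : ℕ) (b : MonoidAlgebra k P), ζ ^ j * b = b * ζ ^ j := by
        intro j b
        induction j with
        | zero => simp
        | succ t iht => rw [pow_succ, mul_assoc, hζcomm b, ← mul_assoc, iht, mul_assoc]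
      have hTmul : ∀ x ∈ T, ∀ b : MonoidAlgebra k P, b * x ∈ T := by
        rintro _ ⟨a, rfl⟩ b
        refine ⟨b * a, ?_⟩
        show b * a * ζ = b * (a * ζ)
        rw [mul_assoc]
      -- powers of T
      have hTpow : ∀ q : ℕ, T ^ (q + 1) ≤ LinearMap.range (LinearMap.mulRight k (ζ ^ (q + 1))) := by
        intro q
        induction q with
        | zero => rw [pow_one, pow_one]
        | succ q ihq =>
          rw [pow_succ]
          refine Submodule.mul_le.mpr ?_
          rintro x hx _ ⟨b, rfl⟩
          obtain ⟨a, ha⟩ := ihq hx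
          refine ⟨a * b, ?_⟩
          show a * b * ζ ^ (q + 1 + 1) = x * (b * ζ)
          rw [← ha]
          show a * b * ζ ^ (q + 1 + 1) = a * ζ ^ (q + 1) * (b * ζ)
          calc a * b * ζ ^ (q + 1 + 1) = a * (b * ζ ^ (q + 1)) * ζ := by
                rw [pow_succ, ← mul_assoc, mul_assoc a b]
            _ = a * (ζ ^ (q + 1) * b) * ζ := by rw [hcommpow]
            _ = a * ζ ^ (q + 1) * (b * ζ) := by rw [← mul_assoc, mul_assoc]
      have hTnil : T ^ (p ^ e) = ⊥ := by
        have hpe : p ^ e = (p ^ e - 1) + 1 := by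
          have : 0 < p ^ e := pow_pos (Nat.Prime.pos (Fact.out)) e
          omega
        refine le_bot_iff.mp ?_
        rw [hpe]
        refine le_trans (hTpow _) ?_
        rintro _ ⟨b, rfl⟩
        show b * ζ ^ (p ^ e - 1 + 1) ∈ (⊥ : Submodule k (MonoidAlgebra k P))
        rw [← hpe, hζpow, mul_zero]
        exact Submodule.zero_mem ⊥
      -- the section ρ and the key claim: f - ρ (π f) ∈ T
      set ρ : MonoidAlgebra k (P ⧸ N) →ₗ[k] MonoidAlgebra k P :=
        MonoidAlgebra.mapDomainLinearMap k k (fun c : P ⧸ N => c.out) with hρdef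
      have hρsingle : ∀ (c : P ⧸ N) (b : k),
          ρ (MonoidAlgebra.single c b) = MonoidAlgebra.single c.out b := by
        intro c b
        exact MonoidAlgebra.mapDomainLinearMap_single _ _ _
      -- powers of z minus 1 are in T
      have hzj : ∀ j : ℕ, MonoidAlgebra.single (z ^ j) (1:k) - 1 ∈ T := by
        intro j
        induction j with
        | zero => rw [pow_zero, ← MonoidAlgebra.one_def, sub_self]; exact Submodule.zero_mem T
        | succ j ihj =>
          have key : MonoidAlgebra.single (z ^ (j+1)) (1:k) - 1
              = MonoidAlgebra.single (z ^ j) (1:k) * ζ + (MonoidAlgebra.single (z ^ j) (1:k) - 1) := by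
            rw [hζdef, mul_sub, mul_one, MonoidAlgebra.single_mul_single, mul_one, ← pow_succ]
            abel
          rw [key]
          exact Submodule.add_mem T ⟨_, rfl⟩ ihj
      have hclaim : ∀ f : MonoidAlgebra k P, f - ρ (π f) ∈ T := by
        set D : MonoidAlgebra k P →ₗ[k] MonoidAlgebra k P :=
          LinearMap.id - (ρ ∘ₗ π.toLinearMap) with hDdef
        have hDf : ∀ f, D f = f - ρ (π f) := fun f => rfl
        intro f
        rw [← hDf]
        have hf : f ∈ (⊤ : Submodule k (MonoidAlgebra k P)) := trivial
        rw [← (MonoidAlgebra.basis P k).span_eq] at hf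
        induction hf using Submodule.span_induction with
        | mem x hx =>
          obtain ⟨a, rfl⟩ := hx
          have hba : (MonoidAlgebra.basis P k : Module.Basis P k (MonoidAlgebra k P)) a
              = MonoidAlgebra.single a (1:k) := rfl
          rw [hba, hDf, hπsingle, hρsingle]
          set t : P := (QuotientGroup.mk (s := N) a).out with htdef
          have hta : QuotientGroup.mk (s := N) t = QuotientGroup.mk a := QuotientGroup.out_eq' _
          have htamem : t⁻¹ * a ∈ N := (QuotientGroup.eq ).mp hta
          obtain ⟨j, hj⟩ := Submonoid.mem_powers_iff _ _ |>.mp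
            (mem_powers_iff_mem_zpowers.mpr htamem)
          have key : MonoidAlgebra.single a (1:k) - MonoidAlgebra.single t (1:k)
              = MonoidAlgebra.single t (1:k) * (MonoidAlgebra.single (z ^ j) (1:k) - 1) := by
            rw [mul_sub, mul_one, MonoidAlgebra.single_mul_single, mul_one, hj]
            have : t * (t⁻¹ * a) = a := by group
            rw [this]
          rw [key]
          exact hTmul _ (hzj j) _
        | zero => rw [map_zero]; exact Submodule.zero_mem T
        | add x y hx hy hx' hy' => rw [map_add]; exact Submodule.add_mem T hx' hy'
        | smul c x hx hx' => rw [map_smul]; exact Submodule.smul_mem T c hx'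
      -- augKer^m ≤ T
      have hsub : (augKer k P) ^ m ≤ T := by
        intro f hf
        have h0 := hclaim f
        rw [hπpow f hf, map_zero, sub_zero] at h0
        exact h0
      refine ⟨m * p ^ e, le_bot_iff.mp ?_⟩
      rw [pow_mul]
      exact le_trans (pow_mono hsub (p ^ e)) (le_of_eq hTnil)

lemma omega_isMaximal (k : Type*) [Field k] (P : Type*) [Group P] :
    (RingHom.ker (aug k P).toRingHom).IsMaximal := by
  refine ⟨⟨?_, ?_⟩⟩
  · intro h
    have h1 : (1 : MonoidAlgebra k P) ∈ RingHom.ker (aug k P).toRingHom := by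
      rw [h]; trivial
    have : aug k P 1 = 0 := h1
    rw [map_one] at this
    exact one_ne_zero this
  · intro I hI
    obtain ⟨x, hxI, hxw⟩ := SetLike.exists_of_lt hI
    have hc : aug k P x ≠ 0 := fun h => hxw h
    set y : MonoidAlgebra k P := algebraMap k _ (aug k P x)⁻¹ * x with hydef
    have hyI : y ∈ I := Ideal.mul_mem_left I _ hxI
    have hy1 : y - 1 ∈ RingHom.ker (aug k P).toRingHom := by
      have : aug k P (y - 1) = 0 := by
        rw [map_sub, hydef, map_mul, map_one]
        simp [aug_single_s15, inv_mul_cancel₀ hc]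
      exact this
    have h1 : (1 : MonoidAlgebra k P) ∈ I := by
      have := I.sub_mem hyI (le_of_lt hI hy1)
      simpa using this
    exact (Ideal.eq_top_iff_one I).mpr h1

lemma jacobson_bot_eq {p : ℕ} [Fact p.Prime] (k : Type*) [Field k] [CharP k p]
    (P : Type*) [Group P] [Fintype P] (hP : IsPGroup p P) :
    (⊥ : Ideal (MonoidAlgebra k P)).jacobson = RingHom.ker (aug k P).toRingHom := by
  obtain ⟨nn, hnn⟩ := augKer_nilpotent k (Fintype.card P) P le_rfl hP
  refine le_antisymm ?_ ?_
  · exact sInf_le ⟨bot_le, omega_isMaximal k P⟩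
  · intro x hx
    rw [Ideal.jacobson, Ideal.mem_sInf]
    rintro J ⟨-, hJmax⟩
    by_contra hxJ
    have hlt : J < J ⊔ Ideal.span {x} := by
      refine lt_of_le_of_ne le_sup_left (fun h => hxJ ?_)
      rw [h]
      exact le_sup_right (α := Ideal (MonoidAlgebra k P)) (Ideal.subset_span (Set.mem_singleton x))
    have htop : J ⊔ Ideal.span {x} = ⊤ := hJmax.out.2 _ hlt
    have h1 : (1 : MonoidAlgebra k P) ∈ J ⊔ Ideal.span {x} := by rw [htop]; trivial
    obtain ⟨y, hyJ, w, hw, hyw⟩ := Submodule.mem_sup.mp h1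
    obtain ⟨b, rfl⟩ := Ideal.mem_span_singleton'.mp hw
    have hbx : b * x ∈ augKer k P := by
      show aug k P (b * x) = 0
      rw [map_mul]
      have : aug k P x = 0 := hx
      rw [this, mul_zero]
    have hnil : IsNilpotent (b * x) := by
      refine ⟨nn, ?_⟩
      have := Submodule.pow_mem_pow (augKer k P) hbx nn
      rw [hnn] at this
      simpa using this
    have hyy : y = 1 - b * x := by
      rw [← hyw]; abel
    have hyu : IsUnit y := by rw [hyy]; exact IsNilpotent.isUnit_one_sub hnil
    exact hJmax.out.1 (Ideal.eq_top_of_isUnit_mem J hyJ hyu)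

section Sigma
variable {k : Type*} [Field k] {P : Type*} [Group P] [Fintype P]

/-- sum of all group elements -/
noncomputable def sigma (k : Type*) [Field k] (P : Type*) [Group P] [Fintype P] :
    MonoidAlgebra k P := ∑ g : P, MonoidAlgebra.single g 1

lemma sigma_apply (h : P) : (sigma k P).coeff h = 1 := by
  classical
  rw [sigma]
  rw [MonoidAlgebra.coeff_sum, Finset.sum_apply']
  simp only [MonoidAlgebra.coeff_single]
  rw [Finset.sum_eq_single h (fun g _ hgh => Finsupp.single_eq_of_ne' hgh) (by simp)]
  simp

lemma sigma_mul (a : MonoidAlgebra k P) : sigma k P * a = (∑ g : P, a.coeff g) • sigma k P := by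
  ext y
  have hbij : Function.Bijective (fun g : P => g⁻¹ * y) :=
    ((Equiv.inv P).trans (Equiv.mulRight y)).bijective
  calc (sigma k P * a).coeff y = (∑ g : P, MonoidAlgebra.single g (1:k) * a).coeff y := by
        rw [sigma, Finset.sum_mul]
    _ = ∑ g : P, (MonoidAlgebra.single g (1:k) * a).coeff y := by rw [MonoidAlgebra.coeff_sum, Finset.sum_apply']
    _ = ∑ g : P, a.coeff (g⁻¹ * y) := by
        refine Finset.sum_congr rfl fun g _ => ?_
        rw [MonoidAlgebra.single_mul_apply, one_mul]
    _ = ∑ g : P, a.coeff g := Fintype.sum_bijective _ hbij _ _ (fun g => rfl)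
    _ = ((∑ g : P, a.coeff g) • sigma k P).coeff y := by
        rw [MonoidAlgebra.coeff_smul_apply, sigma_apply, smul_eq_mul, mul_one]

lemma sigma_mem {p : ℕ} [Fact p.Prime] [CharP k p] (hP : IsPGroup p P)
    (R : Subgroup P) (hR : R ≠ ⊥) :
    sigma k P ∈ Ideal.span {g : MonoidAlgebra k P | ∃ r ∈ R, g = MonoidAlgebra.single r (1 : k) - 1} := by
  classical
  set L := Ideal.span {g : MonoidAlgebra k P | ∃ r ∈ R, g = MonoidAlgebra.single r (1 : k) - 1}
  -- card R is zero in k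
  have hcard : ((Fintype.card R : k)) = 0 := by
    obtain ⟨nR, hnR⟩ := IsPGroup.iff_card.mp (hP.to_subgroup R)
    have hn0 : nR ≠ 0 := by
      intro h
      rw [h, pow_zero] at hnR
      exact hR (Subgroup.card_eq_one.mp hnR)
    rw [← Nat.card_eq_fintype_card, hnR]
    push_cast
    rw [CharP.cast_eq_zero k p]
    exact zero_pow hn0
  -- the subgroup sum τ
  set τ : MonoidAlgebra k P := ∑ r : R, MonoidAlgebra.single (r : P) (1:k) with hτdef
  have hτ : τ ∈ L := by
    have h2 : ∑ r : R, (MonoidAlgebra.single (r : P) (1:k) - 1) ∈ L :=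
      Submodule.sum_mem L fun r _ => Ideal.subset_span ⟨r, r.2, rfl⟩
    have h3 : ∑ r : R, (MonoidAlgebra.single (r : P) (1:k) - 1)
        = τ - (Fintype.card R) • (1 : MonoidAlgebra k P) := by
      rw [Finset.sum_sub_distrib, Finset.sum_const, Finset.card_univ]
    have h4 : (Fintype.card R) • (1 : MonoidAlgebra k P) = 0 := by
      rw [← Nat.cast_smul_eq_nsmul k, hcard, zero_smul]
    rw [h3, h4, sub_zero] at h2
    exact h2
  haveI : Fintype (P ⧸ R) := Fintype.ofFinite _
  set t : MonoidAlgebra k P := ∑ c : P ⧸ R, MonoidAlgebra.single c.out (1:k) with htdef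
  have hb : Function.Bijective (fun x : (P ⧸ R) × R => x.1.out * (x.2 : P)) := by
    constructor
    · rintro ⟨c, r⟩ ⟨c', r'⟩ h
      simp only at h
      have hc : c = c' := by
        have h1 : QuotientGroup.mk (s := R) (c.out * (r : P)) = c := by
          rw [QuotientGroup.mk_mul_of_mem _ r.2, QuotientGroup.out_eq']
        have h2 : QuotientGroup.mk (s := R) (c'.out * (r' : P)) = c' := by
          rw [QuotientGroup.mk_mul_of_mem _ r'.2, QuotientGroup.out_eq']
        rw [← h1, ← h2, h]
      subst hc
      have : (r : P) = r' := mul_left_cancel h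
      rw [Prod.mk.injEq]
      exact ⟨rfl, Subtype.ext this⟩
    · intro g
      set c : P ⧸ R := QuotientGroup.mk g with hcdef
      have hmem : c.out⁻¹ * g ∈ R := by
        rw [← QuotientGroup.eq]
        rw [hcdef, QuotientGroup.out_eq']
      exact ⟨⟨c, ⟨c.out⁻¹ * g, hmem⟩⟩, by simp⟩
  have hστ : sigma k P = t * τ := by
    refine Eq.symm ?_
    calc t * τ = ∑ c : P ⧸ R, ∑ r : R,
          MonoidAlgebra.single c.out (1:k) * MonoidAlgebra.single (r : P) (1:k) := by
            rw [htdef, hτdef, Finset.sum_mul_sum]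
      _ = ∑ x : (P ⧸ R) × R,
          MonoidAlgebra.single x.1.out (1:k) * MonoidAlgebra.single (x.2 : P) (1:k) :=
            (Fintype.sum_prod_type (f := fun x : (P ⧸ R) × R =>
              MonoidAlgebra.single x.1.out (1:k) * MonoidAlgebra.single (x.2 : P) (1:k))).symm
      _ = sigma k P := Fintype.sum_bijective _ hb _ _ (fun x => by
            rw [MonoidAlgebra.single_mul_single, one_mul])
  rw [hστ]
  exact Ideal.mul_mem_left L t hτ

end Sigma

theorem stmt_15 {p : ℕ} [Fact p.Prime] (k : Type*) [Field k] [CharP k p]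
    {P : Type*} [Group P] [Fintype P] (hP : IsPGroup p P)
    (R : Subgroup P) (hR : R ≠ ⊥) :
    sInf {d : ℕ | ∀ f ∈ jacRad k (MonoidAlgebra k P) ^ d, ∀ a : MonoidAlgebra k P,
        f * a ∈ Ideal.span {g : MonoidAlgebra k P | ∃ r ∈ R, g = MonoidAlgebra.single r (1 : k) - 1}}
      < sInf {d : ℕ | jacRad k (MonoidAlgebra k P) ^ d = ⊥} := by
  classical
  set A := MonoidAlgebra k P
  set L := Ideal.span {g : A | ∃ r ∈ R, g = MonoidAlgebra.single r (1 : k) - 1} with hLdef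
  have hjac : jacRad k A = augKer k P := by
    have hjb := jacobson_bot_eq k P hP
    ext x
    simp only [jacRad, Submodule.restrictScalars_mem, hjb, RingHom.mem_ker, augKer,
      LinearMap.mem_ker]
    exact Iff.rfl
  obtain ⟨nn, hnn⟩ := augKer_nilpotent k (Fintype.card P) P le_rfl hP
  have hne : ({d : ℕ | jacRad k A ^ d = ⊥}).Nonempty := ⟨nn, by rw [hjac]; exact hnn⟩
  set d := sInf {d : ℕ | jacRad k A ^ d = ⊥} with hddef
  have hd : jacRad k A ^ d = ⊥ := Nat.sInf_mem hne
  have hd0 : d ≠ 0 := by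
    intro h
    rw [h, pow_zero] at hd
    have h1 : (1 : A) ∈ (1 : Submodule k A) := Submodule.one_le.mp le_rfl
    rw [hd] at h1
    exact one_ne_zero (Submodule.mem_bot k |>.mp h1)
  have hsm : ∀ (c : k) (x : A), x ∈ L → c • x ∈ L := by
    intro c x hx
    rw [Algebra.smul_def]
    exact Ideal.mul_mem_left L _ hx
  have hσL : sigma k P ∈ L := sigma_mem hP R hR
  have hmem : (d - 1) ∈ {d : ℕ | ∀ f ∈ jacRad k A ^ d, ∀ a : A, f * a ∈ L} := by
    intro f hf a
    -- f is fixed under right multiplication by group elements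
    have hfix : ∀ g : P, f * MonoidAlgebra.single g (1:k) = f := by
      intro g
      have hgJ : MonoidAlgebra.single g (1:k) - 1 ∈ jacRad k A := by
        rw [hjac]
        show aug k P (MonoidAlgebra.single g (1:k) - 1) = 0
        rw [map_sub, aug_single_s15, map_one, sub_self]
      have h1 : f * (MonoidAlgebra.single g (1:k) - 1) ∈ jacRad k A ^ (d-1) * jacRad k A :=
        Submodule.mul_mem_mul hf hgJ
      have he : d - 1 + 1 = d := by omega
      rw [← pow_succ, he, hd] at h1
      have h2 : f * (MonoidAlgebra.single g (1:k) - 1) = 0 := Submodule.mem_bot k |>.mp h1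
      rw [mul_sub, mul_one, sub_eq_zero] at h2
      exact h2
    have hconst : ∀ h : P, f.coeff h = f.coeff 1 := by
      intro h
      calc f.coeff h = (f * MonoidAlgebra.single h (1:k)).coeff h := by rw [hfix h]
        _ = f.coeff (h * h⁻¹) * 1 := MonoidAlgebra.mul_single_apply f 1 h h
        _ = f.coeff 1 := by rw [mul_inv_cancel, mul_one]
    have hfσ : f = f.coeff 1 • sigma k P := by
      ext h
      rw [MonoidAlgebra.coeff_smul_apply, sigma_apply, smul_eq_mul, mul_one]
      exact hconst h
    rw [hfσ, smul_mul_assoc, sigma_mul]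
    exact hsm _ _ (hsm _ _ hσL)
  calc sInf {d : ℕ | ∀ f ∈ jacRad k A ^ d, ∀ a : A, f * a ∈ L} ≤ d - 1 := Nat.sInf_le hmem
    _ < d := Nat.sub_lt (Nat.pos_of_ne_zero hd0) one_pos
end
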